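/- Let A be a commutative group. The full subcategory of the functor category Fun(SingleObj A, SingleObj A) spanned by those functors which are equivalences of categories is equivalent to the product category Discrete(MulAut A) × SingleObj A. (This is the decomposition Aut(K(A,n)) ≃ Aut(A) × K(A,n) of the space of self-homotopy-equivalences of an Eilenberg–MacLane space, in the case n = 1.) -/

import Mathlib

open CategoryTheory

universe u

namespace SelfEquivAux

variable (A : Type u) [CommGroup A]

/-- The comparison functor. -/
def E : Discrete (MulAut A) × SingleObj A ⥤
    ObjectProperty.FullSubcategory (fun F : SingleObj A ⥤ SingleObj A => F.IsEquivalence) where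
  obj p := ⟨p.1.as.toMonoidHom.toFunctor,
    inferInstanceAs (p.1.as.toSingleObjEquiv.functor.IsEquivalence)⟩
  map {p q} f := ObjectProperty.homMk (SingleObj.natTrans (f.2 : A) (fun a => by
    have h : p.1.as = q.1.as := Discrete.eq_of_hom f.1
    show (f.2 : A) * p.1.as a = q.1.as a * (f.2 : A)
    rw [h, mul_comm]))
  map_id p := by
    apply ObjectProperty.hom_ext
    apply NatTrans.ext
    funext x
    rfl
  map_comp f g := by
    apply ObjectProperty.hom_ext
    apply NatTrans.ext
    funext x
    rfl

instance faithful : (E A).Faithful where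
  map_injective {p q} {f g} h := by
    have h2 : f.2 = g.2 := congrArg (fun α => α.hom.app (SingleObj.star A)) h
    exact Prod.ext (Subsingleton.elim _ _) h2

instance full : (E A).Full where
  map_surjective {p q} α := by
    have hφ : p.1.as = q.1.as := by
      apply MulEquiv.ext
      intro a
      have := α.hom.naturality (X := SingleObj.star A) (Y := SingleObj.star A) a
      have h' : α.hom.app (SingleObj.star A) * p.1.as a
          = q.1.as a * α.hom.app (SingleObj.star A) := this
      rw [mul_comm] at h'
      exact mul_right_cancel h'
    exact ⟨⟨eqToHom (by rw [Discrete.ext_iff]; exact hφ), α.hom.app (SingleObj.star A)⟩, rfl⟩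

instance essSurj : (E A).EssSurj where
  mem_essImage := by
    rintro ⟨F, hF⟩
    haveI := hF
    let φ : A →* A :=
      { toFun := fun a => F.map (X := SingleObj.star A) (Y := SingleObj.star A) a
        map_one' := F.map_id _
        map_mul' := fun a b => F.map_comp (X := SingleObj.star A) b a }
    have hbij : Function.Bijective φ :=
      ⟨fun _ _ h => F.map_injective h, fun b => F.map_surjective b⟩
    refine ⟨(⟨MulEquiv.ofBijective φ hbij⟩, SingleObj.star A), ⟨eqToIso ?_⟩⟩
    rfl

instance : (E A).IsEquivalence := ⟨inferInstance, inferInstance, inferInstance⟩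

end SelfEquivAux

/-- For a commutative group `A`, the full subcategory of the functor category
`Fun(SingleObj A, SingleObj A)` spanned by the functors that are equivalences of
categories is equivalent to `Discrete (MulAut A) × SingleObj A`.  This is the
decomposition `Aut(K(A,n)) ≃ Aut(A) × K(A,n)` in the case `n = 1`. -/
theorem selfEquivalences_singleObj (A : Type u) [CommGroup A] :
    Nonempty
      (ObjectProperty.FullSubcategory (fun F : SingleObj A ⥤ SingleObj A => F.IsEquivalence) ≌
        Discrete (MulAut A) × SingleObj A) := by
  exact ⟨(SelfEquivAux.E A).asEquivalence.symm⟩
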